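/- arXiv:2504.21637 — 2 statements merged into one kernel-verified Lean document; each statement's English description precedes it below -/
import Mathlib

section
/- Let ω be a nonempty bounded open subset of ℝ² and let s : closure(ω) → ℝ be continuous with s(y) > 0 for every y ∈ closure(ω); set m := min over closure(ω) of s, so m > 0. Let η ∈ L²(ω) satisfy η + s ≥ 0 almost everywhere in ω. For each integer k ≥ 1 define f^{(k)}(y) := 0 if dist(y, ∂ω) < 1/k, f^{(k)}(y) := k·dist(y, ∂ω) − 1 if 1/k ≤ dist(y, ∂ω) < 2/k, and f^{(k)}(y) := 1 if dist(y, ∂ω) ≥ 2/k, and set η^{(k)} := (1 − 1/k)·f^{(k)}·η. Then: (a) η^{(k)} → η in L²(ω) as k → ∞; (b) for each k, η^{(k)}(y) = 0 for almost every y ∈ ω with dist(y, ∂ω) < 1/k; and (c) for each k, η^{(k)}(y) + s(y) ≥ m/k for almost every y ∈ ω. -/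
open MeasureTheory Metric Set Filter

noncomputable section

/-- The cut-off function `f^{(k)}` built from the distance to the boundary of `ω`. -/
def fcut (ω : Set (EuclideanSpace ℝ (Fin 2))) (k : ℕ) (y : EuclideanSpace ℝ (Fin 2)) : ℝ :=
  if Metric.infDist y (frontier ω) < 1 / k then 0
  else if Metric.infDist y (frontier ω) < 2 / k then k * Metric.infDist y (frontier ω) - 1
  else 1

lemma fcut_nonneg (ω : Set (EuclideanSpace ℝ (Fin 2))) (k : ℕ) (y : EuclideanSpace ℝ (Fin 2)) :
    0 ≤ fcut ω k y := by
  unfold fcut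
  split_ifs with h1 h2
  · exact le_rfl
  · rcases Nat.eq_zero_or_pos k with hk | hk
    · exfalso; subst hk; simp at h2; exact absurd h2 (not_lt.2 (infDist_nonneg))
    · push_neg at h1
      have hk' : (0:ℝ) < k := by exact_mod_cast hk
      have := (div_le_iff₀' hk').mp h1
      linarith
  · norm_num

lemma fcut_le_one (ω : Set (EuclideanSpace ℝ (Fin 2))) (k : ℕ) (y : EuclideanSpace ℝ (Fin 2)) :
    fcut ω k y ≤ 1 := by
  unfold fcut
  split_ifs with h1 h2
  · norm_num
  · rcases Nat.eq_zero_or_pos k with hk | hk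
    · exfalso; subst hk; simp at h2; exact absurd h2 (not_lt.2 (infDist_nonneg))
    · have hk' : (0:ℝ) < k := by exact_mod_cast hk
      have := (lt_div_iff₀' hk').mp h2
      linarith
  · exact le_rfl

lemma measurable_fcut (ω : Set (EuclideanSpace ℝ (Fin 2))) (k : ℕ) :
    Measurable (fcut ω k) := by
  have hc : Continuous fun y : EuclideanSpace ℝ (Fin 2) => Metric.infDist y (frontier ω) :=
    continuous_infDist_pt _
  unfold fcut
  refine Measurable.ite (measurableSet_lt hc.measurable measurable_const) measurable_const ?_
  exact Measurable.ite (measurableSet_lt hc.measurable measurable_const)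
    ((hc.measurable.const_mul _).sub measurable_const) measurable_const

lemma coef_nonneg (ω : Set (EuclideanSpace ℝ (Fin 2))) (k : ℕ) (y : EuclideanSpace ℝ (Fin 2)) :
    0 ≤ (1 - 1 / (k : ℝ)) * fcut ω k y := by
  apply mul_nonneg _ (fcut_nonneg ω k y)
  rcases Nat.eq_zero_or_pos k with hk | hk
  · subst hk; norm_num
  · have hk' : (1:ℝ) ≤ k := by exact_mod_cast hk
    have : 1 / (k:ℝ) ≤ 1 := by
      rw [div_le_one (by linarith)]; exact hk'
    linarith

lemma coef_le_one (ω : Set (EuclideanSpace ℝ (Fin 2))) (k : ℕ) (y : EuclideanSpace ℝ (Fin 2)) :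
    (1 - 1 / (k : ℝ)) * fcut ω k y ≤ 1 - 1 / (k : ℝ) := by
  rcases Nat.eq_zero_or_pos k with hk | hk
  · subst hk
    simpa using mul_le_one₀ (le_refl 1) (fcut_nonneg ω 0 y) (fcut_le_one ω 0 y)
  · have hk' : (1:ℝ) ≤ k := by exact_mod_cast hk
    have h1 : (0:ℝ) ≤ 1 - 1 / (k:ℝ) := by
      have : 1 / (k:ℝ) ≤ 1 := by rw [div_le_one (by linarith)]; exact hk'
      linarith
    calc (1 - 1 / (k : ℝ)) * fcut ω k y ≤ (1 - 1 / (k : ℝ)) * 1 :=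
          mul_le_mul_of_nonneg_left (fcut_le_one ω k y) h1
      _ = 1 - 1 / (k : ℝ) := mul_one _

/-- **Step (i) of the density lemma.** With `η^{(k)} := (1 - 1/k) · f^{(k)} · η`:
(a) `η^{(k)} → η` in `L²(ω)`; (b) `η^{(k)}` vanishes a.e. within distance `1/k` of the
boundary; (c) `η^{(k)} + s ≥ m/k` a.e. in `ω`, where `m = min_{closure ω} s > 0`. -/
theorem stmt2 (ω : Set (EuclideanSpace ℝ (Fin 2))) (hωopen : IsOpen ω)
    (hωbdd : Bornology.IsBounded ω) (hωne : ω.Nonempty)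
    (s : EuclideanSpace ℝ (Fin 2) → ℝ) (hscont : ContinuousOn s (closure ω))
    (hspos : ∀ y ∈ closure ω, 0 < s y)
    (m : ℝ) (hm : IsLeast (s '' closure ω) m)
    (η : EuclideanSpace ℝ (Fin 2) → ℝ)
    (hη : MemLp η 2 (volume.restrict ω))
    (hcon : ∀ᵐ y ∂(volume.restrict ω), 0 ≤ η y + s y) :
    0 < m ∧
    Tendsto (fun k : ℕ =>
        eLpNorm (fun y => (1 - 1 / (k : ℝ)) * fcut ω k y * η y - η y) 2 (volume.restrict ω))
      atTop (nhds 0) ∧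
    (∀ k : ℕ, 1 ≤ k → ∀ᵐ y ∂(volume.restrict ω),
      Metric.infDist y (frontier ω) < 1 / k → (1 - 1 / (k : ℝ)) * fcut ω k y * η y = 0) ∧
    (∀ k : ℕ, 1 ≤ k → ∀ᵐ y ∂(volume.restrict ω),
      m / k ≤ (1 - 1 / (k : ℝ)) * fcut ω k y * η y + s y) := by
  set μ := volume.restrict ω
  -- positivity of m
  obtain ⟨y₀, hy₀, hy₀m⟩ := hm.1
  have hm0 : 0 < m := hy₀m ▸ hspos y₀ hy₀
  -- frontier is nonempty
  have hfr : (frontier ω).Nonempty := by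
    by_contra h
    rw [not_nonempty_iff_eq_empty] at h
    have hcl : IsClopen ω := isClopen_iff_frontier_eq_empty.mpr h
    rcases isClopen_iff.mp hcl with h1 | h1
    · exact hωne.ne_empty h1
    · exact NormedSpace.unbounded_univ ℝ _ (h1 ▸ hωbdd)
  refine ⟨hm0, ?_, ?_, ?_⟩
  · -- (a) L² convergence via dominated convergence
    set F : ℕ → EuclideanSpace ℝ (Fin 2) → ℝ :=
      fun k y => (1 - 1 / (k : ℝ)) * fcut ω k y * η y - η y with hF
    have hηm : AEStronglyMeasurable η μ := hη.1
    have hFm : ∀ k, AEStronglyMeasurable (F k) μ := fun k =>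
      ((((measurable_fcut ω k).const_mul _).aestronglyMeasurable.mul hηm).sub hηm)
    have hbd : ∀ k y, ‖F k y‖ ≤ ‖η y‖ := by
      intro k y
      have h0 := coef_nonneg ω k y
      have h1 : (1 - 1 / (k : ℝ)) * fcut ω k y ≤ 1 := by
        refine (coef_le_one ω k y).trans ?_
        have : 0 ≤ 1 / (k:ℝ) := by positivity
        linarith
      have : F k y = ((1 - 1 / (k : ℝ)) * fcut ω k y - 1) * η y := by rw [hF]; ring
      rw [this, norm_mul]
      have habs : ‖(1 - 1 / (k : ℝ)) * fcut ω k y - 1‖ ≤ 1 := by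
        rw [Real.norm_eq_abs, abs_le]; constructor <;> linarith
      calc ‖(1 - 1 / (k : ℝ)) * fcut ω k y - 1‖ * ‖η y‖ ≤ 1 * ‖η y‖ :=
            mul_le_mul_of_nonneg_right habs (norm_nonneg _)
        _ = ‖η y‖ := one_mul _
    -- pointwise a.e. convergence
    have hconv : ∀ᵐ y ∂μ, Tendsto (fun k => F k y) atTop (nhds 0) := by
      filter_upwards [ae_restrict_mem hωopen.measurableSet] with y hy
      have hynot : y ∉ frontier ω := by
        rw [hωopen.frontier_eq]
        exact fun h => h.2 hy
      have hd : 0 < Metric.infDist y (frontier ω) :=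
        (isClosed_frontier.notMem_iff_infDist_pos hfr).mp hynot
      have h2k : Tendsto (fun k : ℕ => 2 / (k:ℝ)) atTop (nhds 0) :=
        tendsto_const_div_atTop_nhds_zero_nat 2
      have hev : ∀ᶠ k : ℕ in atTop, F k y = (1 - 1 / (k : ℝ)) * η y - η y := by
        filter_upwards [h2k.eventually_lt_const hd, eventually_ge_atTop 1] with k hk hk1
        have hk' : (0:ℝ) < k := by exact_mod_cast hk1
        have h12 : 1 / (k:ℝ) ≤ 2 / (k:ℝ) := by
          gcongr
          norm_num
        have hcut : fcut ω k y = 1 := by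
          unfold fcut
          rw [if_neg (not_lt.2 (le_of_lt (lt_of_le_of_lt h12 hk) |>.trans (le_refl _))),
            if_neg (not_lt.2 hk.le)]
        show (1 - 1 / (k : ℝ)) * fcut ω k y * η y - η y = _
        rw [hcut, mul_one]
      have hlim : Tendsto (fun k : ℕ => (1 - 1 / (k : ℝ)) * η y - η y) atTop (nhds 0) := by
        have h1k : Tendsto (fun k : ℕ => 1 / (k:ℝ)) atTop (nhds 0) :=
          tendsto_one_div_atTop_nhds_zero_nat
        have h2 : Tendsto (fun k : ℕ => (1 - 1 / (k : ℝ)) * η y - η y) atTop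
            (nhds ((1 - 0) * η y - η y)) :=
          (((tendsto_const_nhds (x := (1:ℝ))).sub h1k).mul tendsto_const_nhds).sub
            tendsto_const_nhds
        simpa using h2
      exact hlim.congr' (hev.mono fun k h => h.symm)
    -- dominated convergence for the lintegral of squares
    have hbound_fin : (∫⁻ y, (‖η y‖₊ : ENNReal) ^ (2:ℝ) ∂μ) ≠ ⊤ := by
      have := lintegral_rpow_enorm_lt_top_of_eLpNorm_lt_top (f := η) (p := 2) (μ := μ)
        two_ne_zero ENNReal.ofNat_ne_top hη.2
      simp only [ENNReal.toReal_ofNat] at this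
      exact this.ne
    have key : Tendsto (fun k => ∫⁻ y, (‖F k y‖₊ : ENNReal) ^ (2:ℝ) ∂μ) atTop (nhds 0) := by
      have h0 : (0 : ENNReal) = ∫⁻ _, (0:ENNReal) ∂μ := by simp
      rw [h0]
      apply tendsto_lintegral_of_dominated_convergence'
        (bound := fun y => (‖η y‖₊ : ENNReal) ^ (2:ℝ))
      · intro k
        exact ((hFm k).aemeasurable.enorm.pow_const _)
      · intro k
        apply Eventually.of_forall
        intro y
        exact ENNReal.rpow_le_rpow (by exact_mod_cast (hbd k y)) (by norm_num)
      · exact hbound_fin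
      · filter_upwards [hconv] with y hy
        have h1 : Tendsto (fun k => (‖F k y‖₊ : ENNReal)) atTop (nhds 0) := by
          have := (continuous_nnnorm.tendsto (0:ℝ)).comp hy
          simp only [nnnorm_zero] at this
          exact (ENNReal.tendsto_coe.mpr this).congr (fun k => rfl) |>.mono_right
            (by rw [ENNReal.coe_zero])
        have h2 := ((ENNReal.continuous_rpow_const (y := (2:ℝ))).tendsto (0:ENNReal)).comp h1
        simpa [Function.comp_def, ENNReal.zero_rpow_of_pos (by norm_num : (0:ℝ) < 2)] using h2
    -- conclude for eLpNorm
    have heq : ∀ k, eLpNorm (F k) 2 μ = (∫⁻ y, (‖F k y‖₊ : ENNReal) ^ (2:ℝ) ∂μ) ^ ((1:ℝ)/2) := by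
      intro k
      rw [eLpNorm_eq_lintegral_rpow_enorm_toReal two_ne_zero ENNReal.ofNat_ne_top]
      norm_num
      rfl
    have := ((ENNReal.continuous_rpow_const (y := ((1:ℝ)/2))).tendsto (0:ENNReal)).comp key
    simp only [Function.comp_def] at this
    rw [ENNReal.zero_rpow_of_pos (by norm_num : (0:ℝ) < 1/2)] at this
    exact (this.congr (fun k => (heq k).symm))
  · -- (b)
    intro k hk
    apply Eventually.of_forall
    intro y hy
    unfold fcut
    rw [if_pos hy, mul_zero, zero_mul]
  · -- (c)
    intro k hk
    filter_upwards [hcon, ae_restrict_mem hωopen.measurableSet] with y hy hyω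
    have hyc : y ∈ closure ω := subset_closure hyω
    have hsm : m ≤ s y := hm.2 ⟨y, hyc, rfl⟩
    set c := (1 - 1 / (k : ℝ)) * fcut ω k y with hc
    have hc0 : 0 ≤ c := coef_nonneg ω k y
    have hc1 : c ≤ 1 - 1 / (k:ℝ) := coef_le_one ω k y
    have hk' : (1:ℝ) ≤ k := by exact_mod_cast hk
    have hkpos : (0:ℝ) < k := by linarith
    have ht0 : 0 < 1 / (k:ℝ) := by positivity
    have ht1 : 1 / (k:ℝ) ≤ 1 := by rw [div_le_one hkpos]; exact hk'
    have key : c * η y + s y = c * (η y + s y) + (1 - c) * s y := by ring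
    have h1 : 0 ≤ c * (η y + s y) := mul_nonneg hc0 hy
    have h2 : (1/(k:ℝ)) * m ≤ (1 - c) * s y := by
      have hcc : 1/(k:ℝ) ≤ 1 - c := by linarith
      calc (1/(k:ℝ)) * m ≤ (1 - c) * m :=
            mul_le_mul_of_nonneg_right hcc hm0.le
        _ ≤ (1 - c) * s y := mul_le_mul_of_nonneg_left hsm (by linarith)
    have : m / k = (1/(k:ℝ)) * m := by ring
    rw [this, key]
    linarith
end
end

section
/- Let ω be a bounded open subset of ℝ² and let s̃ be a real-valued function that is twice continuously differentiable on an open set containing closure(ω) and satisfies s̃(y) > 0 for every y ∈ closure(ω). Then for every y0 = (y0,1, y0,2) ∈ ω there exist a convex open neighbourhood U ⊂ ω of y0, a real number B, and real numbers B0 > 0 and r > 0 such that, setting g̃(y) := 1 − (1/2)·exp(r·(y1 − y0,1) + r·(y2 − y0,2)) for y = (y1, y2) ∈ ℝ², the following hold: (i) g̃(y) ≥ B0 for all y ∈ U; and (ii) for each ρ ∈ {1, 2}, the function (−s̃ + B)·g̃ is convex along every segment parallel to the coordinate direction e_ρ contained in U (i.e., (−s̃ + B)·g̃ is separately convex in each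 of the two variables on U). -/
open MeasureTheory Metric Set

noncomputable section

lemma aux_coord_abs_le_norm (x : EuclideanSpace ℝ (Fin 2)) (i : Fin 2) : |x i| ≤ ‖x‖ := by
  rw [EuclideanSpace.norm_eq]
  calc |x i| = Real.sqrt (‖x i‖ ^ 2) := by
        rw [Real.sqrt_sq_eq_abs, Real.norm_eq_abs, abs_abs]
    _ ≤ Real.sqrt (∑ j, ‖x j‖ ^ 2) := Real.sqrt_le_sqrt
        (Finset.single_le_sum (f := fun j => ‖x j‖ ^ 2) (fun j _ => sq_nonneg _)
          (Finset.mem_univ i))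

lemma aux_arith (c r N1 N2 D1 D2 gt Et σ : ℝ)
    (hc : 0 < c) (hr1 : 1 ≤ r) (hN1 : 0 ≤ N1) (hN2 : 0 ≤ N2)
    (hcr : c * r = c + 4 * (N2 + 2 * N1 + 1))
    (hD1l : -N1 ≤ D1) (hD2u : D2 ≤ N2)
    (hE12 : 1 / 2 ≤ Et) (hE32 : Et ≤ 3 / 2)
    (hg14 : 1 / 4 ≤ gt) (hgle1 : gt ≤ 1) (hσc : c ≤ σ) :
    0 ≤ -D2 * gt + -D1 * -(1 / 2 * (Et * r)) +
      (-D1 * -(1 / 2 * (Et * r)) + -σ * -(1 / 2 * (Et * r * r))) := by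
  have hr0 : 0 < r := lt_of_lt_of_le one_pos hr1
  have hE0 : 0 < Et := by linarith
  have hg0 : 0 < gt := by linarith
  have t1 : c * (Et * r * r) / 2 ≤ σ * (Et * r * r) / 2 := by nlinarith [mul_le_mul_of_nonneg_right hσc (by positivity : (0:ℝ) ≤ Et * r * r)]
  have t2 : c * (r * r) / 4 ≤ c * (Et * r * r) / 2 := by nlinarith [mul_le_mul_of_nonneg_left (mul_le_mul_of_nonneg_right hE12 (by positivity : (0:ℝ) ≤ r * r)) hc.le]
  have t3 : c * (r * r) / 4 = (c + 4 * (N2 + 2 * N1 + 1)) * r / 4 := by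
    linear_combination (r / 4) * hcr
  have t4 : (N2 + 2 * N1 + 1) * r ≤ (c + 4 * (N2 + 2 * N1 + 1)) * r / 4 := by nlinarith [mul_le_mul_of_nonneg_right hc.le hr0.le]
  have t5 : N2 + 2 * N1 * r ≤ (N2 + 2 * N1 + 1) * r := by nlinarith [mul_le_mul_of_nonneg_left hr1 hN2]
  have t6 : -N1 * (Et * r) ≤ D1 * (Et * r) := mul_le_mul_of_nonneg_right hD1l (by positivity)
  have t7 : -(3 / 2) * N1 * r ≤ -N1 * (Et * r) := by nlinarith [mul_le_mul_of_nonneg_right (mul_le_mul_of_nonneg_left hE32 hN1) hr0.le]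
  have t8 : -N2 * gt ≤ -D2 * gt := mul_le_mul_of_nonneg_right (by linarith) hg0.le
  have t9 : -N2 ≤ -N2 * gt := by nlinarith [mul_le_mul_of_nonneg_left hgle1 hN2]
  linarith [t1, t2, t4, t5, t6, t7, t8, t9, t3.le, t3.ge, mul_nonneg hN1 hr0.le]

lemma aux_convexOn_of_hasDerivAt2 {t1 t2 : ℝ} {h h1 h2 : ℝ → ℝ}
    (hd1 : ∀ t ∈ Set.Icc t1 t2, HasDerivAt h (h1 t) t)
    (hd2 : ∀ t ∈ Set.Ioo t1 t2, HasDerivAt h1 (h2 t) t)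
    (hnn : ∀ t ∈ Set.Ioo t1 t2, 0 ≤ h2 t) :
    ConvexOn ℝ (Set.Icc t1 t2) h := by
  have heq : ∀ t ∈ Set.Ioo t1 t2, deriv h =ᶠ[nhds t] h1 := by
    intro t ht
    filter_upwards [isOpen_Ioo.mem_nhds ht] with s hs
    exact (hd1 s (Set.Ioo_subset_Icc_self hs)).deriv
  apply convexOn_of_deriv2_nonneg (convex_Icc t1 t2)
  · exact fun t ht => (hd1 t ht).continuousAt.continuousWithinAt
  · rw [interior_Icc]
    exact fun t ht =>
      (hd1 t (Set.Ioo_subset_Icc_self ht)).differentiableAt.differentiableWithinAt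
  · rw [interior_Icc]
    intro t ht
    exact ((heq t ht).differentiableAt_iff.mpr
      (hd2 t ht).differentiableAt).differentiableWithinAt
  · rw [interior_Icc]
    intro t ht
    have h2eq : deriv^[2] h t = deriv (deriv h) t := rfl
    rw [h2eq, (heq t ht).deriv_eq, (hd2 t ht).deriv]
    exact hnn t ht

set_option maxHeartbeats 1000000 in
/-- **Convexification lemma (Lemma 7.2, following Frehse).** If `s̃` is `C²` on an open set
containing `closure ω` and strictly positive on `closure ω`, then around every `y0 ∈ ω`
there are a convex open neighbourhood `U ⊆ ω`, constants `B ∈ ℝ`, `B0 > 0`, `r > 0` such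
that, with `g̃(y) = 1 − (1/2)·exp(r(y₁ − y0,₁) + r(y₂ − y0,₂))`, one has `g̃ ≥ B0` on `U`
and `(−s̃ + B)·g̃` is convex along every segment parallel to a coordinate direction
contained in `U`. -/
theorem stmt7 (ω : Set (EuclideanSpace ℝ (Fin 2))) (hωopen : IsOpen ω)
    (hωbdd : Bornology.IsBounded ω)
    (stil : EuclideanSpace ℝ (Fin 2) → ℝ)
    (V : Set (EuclideanSpace ℝ (Fin 2))) (hVopen : IsOpen V) (hV : closure ω ⊆ V)
    (hsC2 : ContDiffOn ℝ 2 stil V)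
    (hspos : ∀ y ∈ closure ω, 0 < stil y) :
    ∀ y0 ∈ ω, ∃ (U : Set (EuclideanSpace ℝ (Fin 2))) (B B0 r : ℝ),
      IsOpen U ∧ Convex ℝ U ∧ y0 ∈ U ∧ U ⊆ ω ∧ 0 < B0 ∧ 0 < r ∧
      (∀ y ∈ U, B0 ≤ 1 - (1 / 2) * Real.exp (r * (y 0 - y0 0) + r * (y 1 - y0 1))) ∧
      (∀ ρ : Fin 2, ∀ (y : EuclideanSpace ℝ (Fin 2)) (t1 t2 : ℝ),
        (∀ t ∈ Set.Icc t1 t2, y + t • EuclideanSpace.single ρ (1 : ℝ) ∈ U) →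
        ConvexOn ℝ (Set.Icc t1 t2) (fun t =>
          (-stil (y + t • EuclideanSpace.single ρ (1 : ℝ)) + B) *
          (1 - (1 / 2) * Real.exp
            (r * ((y + t • EuclideanSpace.single ρ (1 : ℝ)) 0 - y0 0) +
             r * ((y + t • EuclideanSpace.single ρ (1 : ℝ)) 1 - y0 1))))) := by
  intro y0 hy0
  -- minimum of stil on closure ω
  have hclcpt : IsCompact (closure ω) := hωbdd.isCompact_closure
  obtain ⟨z, hz, hzmin⟩ := hclcpt.exists_isMinOn ⟨y0, subset_closure hy0⟩
    (hsC2.continuousOn.mono hV)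
  set c : ℝ := stil z with hc_def
  have hc : 0 < c := hspos z hz
  have hcmin : ∀ x ∈ closure ω, c ≤ stil x := fun x hx => hzmin hx
  -- derivatives
  set f' := fderiv ℝ stil with hf'_def
  have hf'C1 : ContDiffOn ℝ 1 f' V :=
    hsC2.fderiv_of_isOpen hVopen (by norm_num)
  have hf'cont : ContinuousOn f' V := hf'C1.continuousOn
  have hf''cont : ContinuousOn (fderiv ℝ f') V :=
    hf'C1.continuousOn_fderiv_of_isOpen hVopen (le_refl 1)
  -- small closed ball inside ω
  obtain ⟨ε, hε, hball⟩ := Metric.isOpen_iff.1 hωopen y0 hy0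
  set δ0 : ℝ := ε / 2 with hδ0_def
  have hδ0pos : 0 < δ0 := by positivity
  have hδ0 : closedBall y0 δ0 ⊆ ω :=
    (closedBall_subset_ball (by simp only [hδ0_def]; linarith)).trans hball
  have hKV : closedBall y0 δ0 ⊆ V := fun x hx => hV (subset_closure (hδ0 hx))
  -- bounds on derivatives
  obtain ⟨M1, hM1⟩ := (isCompact_closedBall y0 δ0).exists_bound_of_continuousOn
    (hf'cont.mono hKV)
  obtain ⟨M2, hM2⟩ := (isCompact_closedBall y0 δ0).exists_bound_of_continuousOn (f := fderiv ℝ f')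
    (hf''cont.mono hKV)
  obtain ⟨N1, hN1_def⟩ : ∃ N1 : ℝ, N1 = max M1 0 := ⟨_, rfl⟩
  obtain ⟨N2, hN2_def⟩ : ∃ N2 : ℝ, N2 = max M2 0 := ⟨_, rfl⟩
  have hN1 : 0 ≤ N1 := hN1_def ▸ le_max_right _ _
  have hN2 : 0 ≤ N2 := hN2_def ▸ le_max_right _ _
  -- choice of r
  obtain ⟨r, hr_def⟩ : ∃ r : ℝ, r = 1 + 4 * (N2 + 2 * N1 + 1) / c := ⟨_, rfl⟩
  have hr1 : 1 ≤ r := by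
    have h0 : 0 ≤ 4 * (N2 + 2 * N1 + 1) / c := by positivity
    linarith [hr_def.ge, hr_def.le]
  have hrpos : 0 < r := lt_of_lt_of_le one_pos hr1
  have hcr : c * r = c + 4 * (N2 + 2 * N1 + 1) := by
    rw [hr_def]
    field_simp
  -- choice of δ
  have hlog : 0 < Real.log (3 / 2) := Real.log_pos (by norm_num)
  obtain ⟨δ, hδ_def⟩ : ∃ δ : ℝ, δ = min δ0 (Real.log (3 / 2) / (2 * r)) := ⟨_, rfl⟩
  have hδpos : 0 < δ := hδ_def ▸ lt_min hδ0pos (by positivity)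
  set U : Set (EuclideanSpace ℝ (Fin 2)) := ball y0 δ with hU_def
  have hUK : U ⊆ closedBall y0 δ0 :=
    (ball_subset_ball (hδ_def ▸ min_le_left _ _)).trans ball_subset_closedBall
  have hUω : U ⊆ ω := hUK.trans hδ0
  have hUV : U ⊆ V := fun x hx => hV (subset_closure (hUω hx))
  -- exponent bound on U
  have hexpbd : ∀ x ∈ U, |r * (x 0 - y0 0) + r * (x 1 - y0 1)| ≤ Real.log (3 / 2) := by
    intro x hx
    have hxd : ‖x - y0‖ < δ := by rwa [mem_ball, dist_eq_norm] at hx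
    have h0 : |x 0 - y0 0| ≤ ‖x - y0‖ := by
      have := aux_coord_abs_le_norm (x - y0) 0
      simpa using this
    have h1 : |x 1 - y0 1| ≤ ‖x - y0‖ := by
      have := aux_coord_abs_le_norm (x - y0) 1
      simpa using this
    have hδle : δ ≤ Real.log (3 / 2) / (2 * r) := hδ_def ▸ min_le_right _ _
    have key : 2 * r * δ ≤ Real.log (3 / 2) := by
      rw [le_div_iff₀ (by positivity)] at hδle
      linarith [hδle]
    calc |r * (x 0 - y0 0) + r * (x 1 - y0 1)|
        ≤ |r * (x 0 - y0 0)| + |r * (x 1 - y0 1)| := abs_add_le _ _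
      _ = r * |x 0 - y0 0| + r * |x 1 - y0 1| := by
          rw [abs_mul, abs_mul, abs_of_pos hrpos]
      _ ≤ r * ‖x - y0‖ + r * ‖x - y0‖ := by
          have := hrpos.le
          gcongr
      _ ≤ r * δ + r * δ := by
          have := hrpos.le
          gcongr <;> exact hxd.le
      _ = 2 * r * δ := by ring
      _ ≤ Real.log (3 / 2) := key
  have hEbd : ∀ x ∈ U, Real.exp (r * (x 0 - y0 0) + r * (x 1 - y0 1)) ≤ 3 / 2 ∧
      (1 / 2 : ℝ) ≤ Real.exp (r * (x 0 - y0 0) + r * (x 1 - y0 1)) := by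
    intro x hx
    obtain ⟨hu, hl⟩ := abs_le.1 (hexpbd x hx)
    constructor
    · calc Real.exp (r * (x 0 - y0 0) + r * (x 1 - y0 1))
          ≤ Real.exp (Real.log (3 / 2)) := Real.exp_le_exp.2 hl
        _ = 3 / 2 := Real.exp_log (by norm_num)
    · have : Real.exp (-Real.log (3 / 2)) ≤
          Real.exp (r * (x 0 - y0 0) + r * (x 1 - y0 1)) := Real.exp_le_exp.2 hu
      calc (1 / 2 : ℝ) ≤ 2 / 3 := by norm_num
        _ = Real.exp (-Real.log (3 / 2)) := by
            rw [Real.exp_neg, Real.exp_log (by norm_num)]; norm_num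
        _ ≤ _ := this
  refine ⟨U, 0, 1 / 4, r, isOpen_ball, convex_ball y0 δ, mem_ball_self hδpos, hUω,
    by norm_num, hrpos, ?_, ?_⟩
  · intro x hx
    have := (hEbd x hx).1
    linarith
  · intro ρ y t1 t2 hseg
    set v := EuclideanSpace.single ρ (1 : ℝ) with hv_def
    have hv01 : v 0 + v 1 = 1 := by
      fin_cases ρ <;> simp [hv_def, EuclideanSpace.single_apply]
    have hγ : ∀ (t : ℝ) (i : Fin 2), (y + t • v) i = y i + t * v i := by
      intro t i
      simp [PiLp.add_apply, PiLp.smul_apply, smul_eq_mul]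
    set a : ℝ := y 0 + y 1 - y0 0 - y0 1 with ha_def
    have hexp : ∀ t : ℝ,
        r * ((y + t • v) 0 - y0 0) + r * ((y + t • v) 1 - y0 1) = r * a + r * t := by
      intro t
      rw [hγ t 0, hγ t 1, ha_def]
      linear_combination (r * t) * hv01
    -- auxiliary functions
    set E : ℝ → ℝ := fun t => Real.exp (r * a + r * t) with hE_def
    set g : ℝ → ℝ := fun t => 1 - 1 / 2 * E t with hg_def
    set g1 : ℝ → ℝ := fun t => -(1 / 2 * (E t * r)) with hg1_def
    set g2 : ℝ → ℝ := fun t => -(1 / 2 * (E t * r * r)) with hg2_def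
    have hEd : ∀ t : ℝ, HasDerivAt E (E t * r) t := by
      intro t
      have hlin : HasDerivAt (fun t : ℝ => r * a + r * t) r t := by
        simpa using ((hasDerivAt_id t).const_mul r).const_add (r * a)
      exact (Real.hasDerivAt_exp (r * a + r * t)).comp t hlin
    have hgd : ∀ t : ℝ, HasDerivAt g (g1 t) t := fun t =>
      (((hEd t).const_mul (1 / 2)).const_sub 1)
    have hg1d : ∀ t : ℝ, HasDerivAt g1 (g2 t) t := by
      intro t
      have := (((hEd t).mul_const r).const_mul (1 / 2)).neg
      exact this
    -- derivatives of stil along the line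
    have hγd : ∀ t : ℝ, HasDerivAt (fun t : ℝ => y + t • v) v t := by
      intro t
      simpa using ((hasDerivAt_id t).smul_const v).const_add y
    have hmem : ∀ t ∈ Set.Icc t1 t2, y + t • v ∈ U := hseg
    have hσd : ∀ t, y + t • v ∈ U →
        HasDerivAt (fun s : ℝ => stil (y + s • v)) (f' (y + t • v) v) t := by
      intro t hx
      have hdiff : DifferentiableAt ℝ stil (y + t • v) :=
        (hsC2.contDiffAt (hVopen.mem_nhds (hUV hx))).differentiableAt (by norm_num)
      exact hdiff.hasFDerivAt.comp_hasDerivAt t (hγd t)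
    have hσ'd : ∀ t, y + t • v ∈ U →
        HasDerivAt (fun s : ℝ => f' (y + s • v) v)
          (fderiv ℝ f' (y + t • v) v v) t := by
      intro t hx
      have hf'diff : DifferentiableAt ℝ f' (y + t • v) :=
        (hf'C1.contDiffAt (hVopen.mem_nhds (hUV hx))).differentiableAt (by norm_num)
      have hcomp : HasDerivAt (fun s : ℝ => f' (y + s • v)) (fderiv ℝ f' (y + t • v) v) t :=
        hf'diff.hasFDerivAt.comp_hasDerivAt t (hγd t)
      simpa using hcomp.clm_apply (hasDerivAt_const t v)
    -- the function and its derivatives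
    set h1 : ℝ → ℝ := fun t =>
      -(f' (y + t • v) v) * g t + -stil (y + t • v) * g1 t with hh1_def
    set h2 : ℝ → ℝ := fun t =>
      (-(fderiv ℝ f' (y + t • v) v v) * g t + -(f' (y + t • v) v) * g1 t) +
      (-(f' (y + t • v) v) * g1 t + -stil (y + t • v) * g2 t) with hh2_def
    have hhd : ∀ t ∈ Set.Icc t1 t2,
        HasDerivAt (fun t => -stil (y + t • v) * g t) (h1 t) t := by
      intro t ht
      exact ((hσd t (hmem t ht)).neg).mul (hgd t)
    have hh1d : ∀ t ∈ Set.Ioo t1 t2, HasDerivAt h1 (h2 t) t := by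
      intro t ht
      have ht' := Set.Ioo_subset_Icc_self ht
      exact (((hσ'd t (hmem t ht')).neg).mul (hgd t)).add
        (((hσd t (hmem t ht')).neg).mul (hg1d t))
    have hnn : ∀ t ∈ Set.Ioo t1 t2, 0 ≤ h2 t := by
      intro t ht
      have hx : y + t • v ∈ U := hmem t (Set.Ioo_subset_Icc_self ht)
      set x := y + t • v with hx_def
      have hxK : x ∈ closedBall y0 δ0 := hUK hx
      have hD1 : |f' x v| ≤ N1 := by
        have h1' : ‖f' x v‖ ≤ ‖f' x‖ * ‖v‖ := (f' x).le_opNorm v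
        have hvnorm : ‖v‖ = 1 := by
          rw [hv_def, EuclideanSpace.norm_single]; norm_num
        have := (hM1 x hxK).trans (le_max_left M1 0)
        rw [Real.norm_eq_abs] at h1'
        rw [hvnorm, mul_one] at h1'
        exact h1'.trans (by rw [hN1_def]; exact this)
      have hD2 : |fderiv ℝ f' x v v| ≤ N2 := by
        have hvnorm : ‖v‖ = 1 := by
          rw [hv_def, EuclideanSpace.norm_single]; norm_num
        have h1' : ‖fderiv ℝ f' x v v‖ ≤ ‖fderiv ℝ f' x v‖ * ‖v‖ :=
          (fderiv ℝ f' x v).le_opNorm v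
        have h2' : ‖fderiv ℝ f' x v‖ ≤ ‖fderiv ℝ f' x‖ * ‖v‖ :=
          (fderiv ℝ f' x).le_opNorm v
        have h3' := (hM2 x hxK).trans (le_max_left M2 0)
        rw [Real.norm_eq_abs] at h1'
        rw [hvnorm, mul_one] at h1' h2'
        exact h1'.trans (h2'.trans (by rw [hN2_def]; exact h3'))
      have hσc : c ≤ stil x := hcmin x (subset_closure (hUω hx))
      have hE32 : E t ≤ 3 / 2 := by
        have := (hEbd x hx).1
        rwa [hx_def, hexp t] at this
      have hE12 : (1 / 2 : ℝ) ≤ E t := by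
        have := (hEbd x hx).2
        rwa [hx_def, hexp t] at this
      have hg14 : (1 / 4 : ℝ) ≤ g t := by
        simp only [hg_def]
        linarith
      have hgle1 : g t ≤ 1 := by
        simp only [hg_def]
        linarith
      obtain ⟨hD1l, hD1u⟩ := abs_le.1 hD1
      obtain ⟨hD2l, hD2u⟩ := abs_le.1 hD2
      simp only [hh2_def, hg1_def, hg2_def]
      exact aux_arith c r N1 N2 (f' x v) (fderiv ℝ f' x v v) (g t) (E t) (stil x)
        hc hr1 hN1 hN2 hcr hD1l hD2u hE12 hE32 hg14 hgle1 hσc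
    have key : ConvexOn ℝ (Set.Icc t1 t2) (fun t => -stil (y + t • v) * g t) :=
      aux_convexOn_of_hasDerivAt2 hhd hh1d hnn
    have hfun : (fun t : ℝ =>
        (-stil (y + t • v) + (0 : ℝ)) *
          (1 - 1 / 2 * Real.exp
            (r * ((y + t • v) 0 - y0 0) + r * ((y + t • v) 1 - y0 1)))) =
        fun t => -stil (y + t • v) * g t := by
      funext t
      rw [hexp t]
      simp only [hg_def, hE_def]
      ring
    rw [hfun]
    exact key
end
end
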